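/- Let K be a field of characteristic zero and σ : I → J a surjective map of finite nonempty sets. Let σ* : K[t_j : j∈J] → K[t_i : i∈I] be the K-algebra map with σ*(t_j) = ∑_{σ(i)=j} t_i, and let σ_* : K[t_i : i∈I] → K[t_j : j∈J] be the K-linear map with σ_*(t^{[ν]}) = t^{[σ_*(ν+1)−1]} on the divided monomial basis. Then for all f ∈ K[t_i : i∈I] and g ∈ K[t_j : j∈J], ∫_I f·σ*(g) = ∫_J σ_*(f)·g. -/

import Mathlib

/-- The linear functional `∫_I` on `K[t_i : i ∈ I]` determined on monomials by
`∫_I t^{[ν]} = 1 / (n + |ν|)!`. -/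
noncomputable def simplexIntegral (K : Type*) [Field K] [CharZero K] {I : Type*}
    [Fintype I] (n : ℕ) (f : MvPolynomial I K) : K :=
  ∑ ν ∈ f.support, f.coeff ν *
    (((∏ i, Nat.factorial (ν i) : ℕ) : K) /
      ((Nat.factorial (n + ∑ i, ν i) : ℕ) : K))

/-- The `K`-algebra map `σ* : K[t_j : j ∈ J] → K[t_i : i ∈ I]`, `σ*(t_j) = ∑_{σ i = j} t_i`. -/
noncomputable def sigmaUpper (K : Type*) [CommSemiring K] {I J : Type*} [Fintype I]
    (σ : I → J) [DecidableEq J] :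
    MvPolynomial J K →ₐ[K] MvPolynomial I K :=
  MvPolynomial.aeval fun j =>
    ∑ i ∈ Finset.univ.filter fun i => σ i = j, MvPolynomial.X i

/-- For `σ : I → J` and a multi-index `ν : I → ℕ`, the multi-index `σ_*(ν + 1) - 1`. -/
noncomputable def pushExp {I J : Type*} [Fintype I] [DecidableEq J] [Finite J]
    (σ : I → J) (ν : I →₀ ℕ) : J →₀ ℕ :=
  Finsupp.equivFunOnFinite.symm fun j =>
    (∑ i ∈ Finset.univ.filter fun i => σ i = j, (ν i + 1)) - 1

/-- The `K`-linear map `σ_*` defined on the divided monomial basis by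
`σ_*(t^{[ν]}) = t^{[σ_*(ν+1)−1]}`. -/
noncomputable def sigmaLower (K : Type*) [Field K] [CharZero K] {I J : Type*}
    [Fintype I] [Fintype J] [DecidableEq J] (σ : I → J)
    (f : MvPolynomial I K) : MvPolynomial J K :=
  ∑ ν ∈ f.support,
    (f.coeff ν * (((∏ i, Nat.factorial (ν i) : ℕ) : K) /
        ((∏ j, Nat.factorial (pushExp σ ν j) : ℕ) : K))) •
      MvPolynomial.monomial (pushExp σ ν) (1 : K)

namespace SimplexAdjoint

open Finset MvPolynomial

variable {K : Type*} [Field K] [CharZero K] {I J : Type*} [Fintype I] [Fintype J]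
  [DecidableEq J]

/-- weight of a monomial under `∫`. -/
noncomputable def w (K : Type*) [Field K] [CharZero K] {I : Type*} [Fintype I]
    (n : ℕ) (ν : I →₀ ℕ) : K :=
  ((∏ i, Nat.factorial (ν i) : ℕ) : K) / ((Nat.factorial (n + ∑ i, ν i) : ℕ) : K)

/-- ratio of factorials in `σ_*`. -/
noncomputable def rr (K : Type*) [Field K] [CharZero K] {I J : Type*} [Fintype I]
    [Fintype J] [DecidableEq J] (σ : I → J) (ν : I →₀ ℕ) : K :=
  ((∏ i, Nat.factorial (ν i) : ℕ) : K) / ((∏ j, Nat.factorial (pushExp σ ν j) : ℕ) : K)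

noncomputable def siLM (K : Type*) [Field K] [CharZero K] {I : Type*} [Fintype I]
    (n : ℕ) : MvPolynomial I K →ₗ[K] K :=
  (Finsupp.lsum K fun ν => LinearMap.toSpanSingleton K K (w K n ν)) ∘ₗ
    (AddMonoidAlgebra.coeffLinearEquiv K).toLinearMap

noncomputable def slLM (K : Type*) [Field K] [CharZero K] {I J : Type*} [Fintype I]
    [Fintype J] [DecidableEq J] (σ : I → J) : MvPolynomial I K →ₗ[K] MvPolynomial J K :=
  (Finsupp.lsum K fun ν =>
    LinearMap.toSpanSingleton K _ (rr K σ ν • (monomial (pushExp σ ν) (1 : K)))) ∘ₗ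
    (AddMonoidAlgebra.coeffLinearEquiv K).toLinearMap

lemma siLM_eq (n : ℕ) (f : MvPolynomial I K) : siLM K n f = simplexIntegral K n f := by
  show Finsupp.sum (AddMonoidAlgebra.coeff f) (fun ν c => c • w K n ν) = _
  rw [Finsupp.sum, simplexIntegral]
  exact Finset.sum_congr rfl fun ν _ => by rw [smul_eq_mul]; rfl

lemma slLM_eq (σ : I → J) (f : MvPolynomial I K) : slLM K σ f = sigmaLower K σ f := by
  show Finsupp.sum (AddMonoidAlgebra.coeff f) (fun ν c => c • (rr K σ ν • monomial (pushExp σ ν) (1 : K))) = _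
  rw [Finsupp.sum, sigmaLower]
  exact Finset.sum_congr rfl fun ν _ => by rw [smul_smul]; rfl

lemma siLM_monomial (n : ℕ) (ν : I →₀ ℕ) (c : K) :
    siLM K n (monomial ν c) = c * w K n ν := by
  show Finsupp.sum (Finsupp.single ν c) (fun ν c => c • w K n ν) = _
  rw [Finsupp.sum_single_index (by simp), smul_eq_mul]

lemma slLM_monomial (σ : I → J) (ν : I →₀ ℕ) (c : K) :
    slLM K σ (monomial ν c) = (c * rr K σ ν) • monomial (pushExp σ ν) (1 : K) := by
  show Finsupp.sum (Finsupp.single ν c)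
      (fun ν c => c • (rr K σ ν • monomial (pushExp σ ν) (1 : K))) = _
  rw [Finsupp.sum_single_index (by simp), smul_smul]

lemma pushExp_apply (σ : I → J) (ν : I →₀ ℕ) (j : J) :
    pushExp σ ν j = (∑ i ∈ Finset.univ.filter fun i => σ i = j, (ν i + 1)) - 1 := by
  simp [pushExp]

lemma fiber_nonempty {σ : I → J} (hσ : Function.Surjective σ) (j : J) :
    (Finset.univ.filter fun i => σ i = j).Nonempty := by
  obtain ⟨i, hi⟩ := hσ j
  exact ⟨i, by simp [hi]⟩

lemma one_le_fiber_sum {σ : I → J} {j : J} (ν : I →₀ ℕ)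
    (h : (Finset.univ.filter fun i => σ i = j).Nonempty) :
    1 ≤ ∑ i ∈ Finset.univ.filter fun i => σ i = j, (ν i + 1) := by
  obtain ⟨i, hi⟩ := h
  have h := Finset.single_le_sum (f := fun i => ν i + 1) (fun i _ => Nat.zero_le _) hi
  omega

lemma fiber_sum {σ : I → J} (hσ : Function.Surjective σ) (ν : I →₀ ℕ) (j : J) :
    ∑ i ∈ Finset.univ.filter fun i => σ i = j, (ν i + 1) = pushExp σ ν j + 1 := by
  rw [pushExp_apply, Nat.sub_add_cancel (one_le_fiber_sum ν (fiber_nonempty hσ j))]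

lemma pushExp_add_single (σ : I → J) (ν : I →₀ ℕ) (i : I) :
    pushExp σ (ν + Finsupp.single i 1) = pushExp σ ν + Finsupp.single (σ i) 1 := by
  classical
  ext j
  rw [Finsupp.add_apply, pushExp_apply, pushExp_apply, Finsupp.single_apply]
  have hsum : ∑ i' ∈ Finset.univ.filter fun i' => σ i' = j, (((ν + Finsupp.single i 1 : I →₀ ℕ) i') + 1)
      = (∑ i' ∈ Finset.univ.filter fun i' => σ i' = j, (ν i' + 1))
        + (if σ i = j then 1 else 0) := by
    have hterm : ∀ i', ((ν + Finsupp.single i 1 : I →₀ ℕ) i') + 1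
        = (ν i' + 1) + (if i = i' then 1 else 0) := by
      intro i'
      rw [Finsupp.add_apply, Finsupp.single_apply]
      split <;> omega
    rw [Finset.sum_congr rfl fun i' _ => hterm i', Finset.sum_add_distrib,
      Finset.sum_ite_eq]
    simp
  rw [hsum]
  by_cases h : σ i = j
  · have h1 := one_le_fiber_sum ν (⟨i, by simp [h]⟩ :
      (Finset.univ.filter fun i' => σ i' = j).Nonempty)
    simp only [h, if_pos]
    omega
  · simp [h]

lemma prod_factorial_single {A : Type*} [Fintype A] [DecidableEq A] (μ : A →₀ ℕ) (a : A) :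
    ∏ x, Nat.factorial ((μ + Finsupp.single a 1 : A →₀ ℕ) x)
      = (μ a + 1) * ∏ x, Nat.factorial (μ x) := by
  rw [← Finset.mul_prod_erase Finset.univ (fun x => Nat.factorial ((μ + Finsupp.single a 1 : A →₀ ℕ) x))
      (Finset.mem_univ a),
    ← Finset.mul_prod_erase Finset.univ (fun x => Nat.factorial (μ x)) (Finset.mem_univ a)]
  have h1 : ((μ + Finsupp.single a 1 : A →₀ ℕ) a) = μ a + 1 := by simp
  have h2 : ∀ x ∈ Finset.univ.erase a,
      Nat.factorial ((μ + Finsupp.single a 1 : A →₀ ℕ) x) = Nat.factorial (μ x) := by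
    intro x hx
    have hne : a ≠ x := fun h => (Finset.mem_erase.mp hx).1 h.symm
    simp [Finsupp.single_apply, hne]
  rw [Finset.prod_congr rfl h2, h1, Nat.factorial_succ, mul_assoc]

lemma rr_add_single (σ : I → J) (ν : I →₀ ℕ) (i : I) :
    rr K σ (ν + Finsupp.single i 1)
      = (((ν i + 1 : ℕ) : K) / ((pushExp σ ν (σ i) + 1 : ℕ) : K)) * rr K σ ν := by
  classical
  rw [rr, rr, pushExp_add_single, prod_factorial_single, prod_factorial_single]
  push_cast
  rw [div_mul_div_comm]

lemma slLM_monomial_mul_X (σ : I → J) (ν : I →₀ ℕ) (c : K) (i : I) :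
    slLM K σ (monomial ν c * X i)
      = (((ν i + 1 : ℕ) : K) / ((pushExp σ ν (σ i) + 1 : ℕ) : K)) •
          (slLM K σ (monomial ν c) * X (σ i)) := by
  rw [← pow_one (X i), ← monomial_add_single, slLM_monomial, slLM_monomial,
    smul_mul_assoc, ← pow_one (X (σ i)), ← monomial_add_single, pushExp_add_single,
    rr_add_single, smul_smul]
  congr 1
  ring

lemma slLM_monomial_mul_fiberSum {σ : I → J} (hσ : Function.Surjective σ) (j : J)
    (ν : I →₀ ℕ) (c : K) :
    slLM K σ (monomial ν c * ∑ i ∈ Finset.univ.filter fun i => σ i = j, X i)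
      = slLM K σ (monomial ν c) * X j := by
  rw [Finset.mul_sum, map_sum]
  have h1 : ∀ i ∈ Finset.univ.filter fun i => σ i = j,
      slLM K σ (monomial ν c * X i)
        = (((ν i + 1 : ℕ) : K) / ((pushExp σ ν j + 1 : ℕ) : K)) •
            (slLM K σ (monomial ν c) * X j) := by
    intro i hi
    have hij : σ i = j := (Finset.mem_filter.mp hi).2
    rw [slLM_monomial_mul_X, hij]
  rw [Finset.sum_congr rfl h1, ← Finset.sum_smul]
  have h2 : (∑ i ∈ Finset.univ.filter fun i => σ i = j,
      (((ν i + 1 : ℕ) : K) / ((pushExp σ ν j + 1 : ℕ) : K))) = 1 := by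
    rw [← Finset.sum_div, ← Nat.cast_sum, fiber_sum hσ]
    exact div_self (Nat.cast_ne_zero.mpr (Nat.succ_ne_zero _))
  rw [h2, one_smul]

lemma slLM_mul_fiberSum {σ : I → J} (hσ : Function.Surjective σ) (j : J)
    (f : MvPolynomial I K) :
    slLM K σ (f * ∑ i ∈ Finset.univ.filter fun i => σ i = j, X i)
      = slLM K σ f * X j := by
  conv_lhs => rw [f.as_sum]
  conv_rhs => rw [f.as_sum]
  rw [Finset.sum_mul, map_sum, map_sum, Finset.sum_mul]
  exact Finset.sum_congr rfl fun ν _ => slLM_monomial_mul_fiberSum hσ j ν _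

lemma proj {σ : I → J} (hσ : Function.Surjective σ) (g : MvPolynomial J K) :
    ∀ f : MvPolynomial I K, slLM K σ (f * sigmaUpper K σ g) = slLM K σ f * g := by
  induction g using MvPolynomial.induction_on with
  | C a =>
    intro f
    have hC : sigmaUpper K σ (C a) = C a := by simp [sigmaUpper]
    rw [hC, mul_comm, C_mul', map_smul, mul_comm, C_mul']
  | add p q hp hq =>
    intro f
    rw [map_add, mul_add, map_add, hp, hq, mul_add]
  | mul_X p j hp =>
    intro f
    have hx : sigmaUpper K σ (X j) = ∑ i ∈ Finset.univ.filter fun i => σ i = j, X i := by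
      simp [sigmaUpper]
    rw [_root_.map_mul (sigmaUpper K σ) p (X j), hx, ← mul_assoc,
      slLM_mul_fiberSum hσ, hp, mul_assoc]

lemma sum_pushExp {σ : I → J} (hσ : Function.Surjective σ) (ν : I →₀ ℕ) :
    (∑ j, pushExp σ ν j) + Fintype.card J = (∑ i, ν i) + Fintype.card I := by
  have h1 : ∑ j, (pushExp σ ν j + 1) = ∑ i, (ν i + 1) := by
    rw [Finset.sum_congr rfl fun j _ => (fiber_sum hσ ν j).symm]
    exact Finset.sum_fiberwise_of_maps_to (fun i _ => Finset.mem_univ (σ i)) _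
  simp only [Finset.sum_add_distrib, Finset.sum_const, smul_eq_mul, mul_one,
    Finset.card_univ] at h1
  omega

lemma mul_div_mul_div_cancel (a P Q D : K) (hQ : Q ≠ 0) :
    a * (P / Q) * (Q / D) = a * (P / D) := by
  rw [mul_assoc, div_mul_div_comm, mul_comm P Q, mul_div_mul_left _ _ hQ]

lemma si_sl [Nonempty J] {σ : I → J} (hσ : Function.Surjective σ)
    (f : MvPolynomial I K) :
    siLM K (Fintype.card J - 1) (slLM K σ f) = siLM K (Fintype.card I - 1) f := by
  conv_lhs => rw [f.as_sum]
  conv_rhs => rw [f.as_sum]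
  rw [map_sum, map_sum, map_sum]
  refine Finset.sum_congr rfl fun ν _ => ?_
  rw [slLM_monomial, map_smul, siLM_monomial, siLM_monomial, smul_eq_mul, one_mul]
  rw [rr, w, w]
  have hD : Fintype.card J - 1 + ∑ j, pushExp σ ν j
      = Fintype.card I - 1 + ∑ i, ν i := by
    have h0 := sum_pushExp hσ ν
    have h1 : 1 ≤ Fintype.card J := Fintype.card_pos
    have h2 : Fintype.card J ≤ Fintype.card I := Fintype.card_le_of_surjective σ hσ
    omega
  rw [hD]
  exact mul_div_mul_div_cancel _ _ _ _
    (Nat.cast_ne_zero.mpr (Finset.prod_pos fun j _ => Nat.factorial_pos _).ne')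

end SimplexAdjoint

/-- Adjunction formula: `∫_I f · σ*(g) = ∫_J σ_*(f) · g`. -/
theorem simplexIntegral_sigmaLower_adjoint (K : Type*) [Field K] [CharZero K]
    (I J : Type*) [Fintype I] [Fintype J] [DecidableEq J] [Nonempty I] [Nonempty J]
    (σ : I → J) (hσ : Function.Surjective σ)
    (f : MvPolynomial I K) (g : MvPolynomial J K) :
    simplexIntegral K (Fintype.card I - 1) (f * sigmaUpper K σ g) =
      simplexIntegral K (Fintype.card J - 1) (sigmaLower K σ f * g) := by
  rw [← SimplexAdjoint.siLM_eq, ← SimplexAdjoint.siLM_eq, ← SimplexAdjoint.slLM_eq,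
    ← SimplexAdjoint.proj hσ g f, SimplexAdjoint.si_sl hσ]
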